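/- arXiv:2603.08226 — 2 statements merged into one kernel-verified Lean document; each statement's English description precedes it below -/
import Mathlib

section
/- Let 0 ≤ η < 1. Then ∫₀^η ∫_{−√(2y(1−y))}^{√(2y(1−y))} (1 − x² − y²)^{−3/2} dx dy = 2·√(2η)/√(1−η) − 2·arctan( √(2η)/√(1−η) ). Equivalently, this is the hyperbolic area of the horodisk segment E¹_η = {(x,y) : x² + 2y² − 2y ≤ 0, y ≤ η}. -/
open Real Set

lemma rpow_neg_three_halves {t : ℝ} (ht : 0 < t) :
    t ^ (-(3:ℝ)/2) = 1 / (t * Real.sqrt t) := by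
  have h : t ^ ((3:ℝ)/2) = t * Real.sqrt t := by
    rw [show (3:ℝ)/2 = 1 + 1/2 by norm_num, Real.rpow_add ht, Real.rpow_one,
      Real.sqrt_eq_rpow]
  rw [show (-(3:ℝ)/2) = -((3:ℝ)/2) by norm_num, Real.rpow_neg ht.le, h, one_div]

lemma inner_integral (y : ℝ) (hy0 : 0 ≤ y) (hy1 : y < 1) :
    (∫ x in (-(Real.sqrt (2 * y * (1 - y))))..(Real.sqrt (2 * y * (1 - y))),
        (1 - x ^ 2 - y ^ 2) ^ (-(3:ℝ)/2)) =
      2 * Real.sqrt (2 * y * (1 - y)) / ((1 - y ^ 2) * (1 - y)) := by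
  set a := Real.sqrt (2 * y * (1 - y)) with ha_def
  set c := 1 - y ^ 2 with hc_def
  have hc : 0 < c := by nlinarith
  have ha0 : 0 ≤ a := Real.sqrt_nonneg _
  have ha2 : a ^ 2 = 2 * y * (1 - y) := Real.sq_sqrt (by nlinarith)
  have hcy : ∀ x : ℝ, 1 - x ^ 2 - y ^ 2 = c - x ^ 2 := fun x => by rw [hc_def]; ring
  clear_value a c
  have hkey : ∀ x ∈ Set.uIcc (-a) a, 0 < c - x ^ 2 := by
    intro x hx
    rw [Set.uIcc_of_le (by linarith)] at hx
    have hx2 : x ^ 2 ≤ a ^ 2 := sq_le_sq' hx.1 hx.2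
    nlinarith
  have hderiv : ∀ x ∈ Set.uIcc (-a) a,
      HasDerivAt (fun x => x / (c * Real.sqrt (c - x ^ 2)))
        ((1 - x ^ 2 - y ^ 2) ^ (-(3:ℝ)/2)) x := by
    intro x hx
    have hpos := hkey x hx
    have h1 : HasDerivAt (fun x : ℝ => c - x ^ 2) (-(2 * x)) x := by
      simpa using (hasDerivAt_pow 2 x).const_sub c
    have h2 : HasDerivAt (fun x => Real.sqrt (c - x ^ 2))
        (-(2 * x) / (2 * Real.sqrt (c - x ^ 2))) x :=
      h1.sqrt hpos.ne'
    have h3 := (hasDerivAt_id x).div (h2.const_mul c)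
      (by positivity)
    convert h3 using 1
    case e'_4 => rfl
    case e'_5 => rfl
    case e'_8 => rfl
    simp only [id_eq]
    obtain ⟨s, hs_eq, hs, hs2⟩ : ∃ s, Real.sqrt (c - x ^ 2) = s ∧ 0 < s ∧ s ^ 2 = c - x ^ 2 :=
      ⟨_, rfl, Real.sqrt_pos.2 hpos, Real.sq_sqrt hpos.le⟩
    rw [hcy x, rpow_neg_three_halves hpos, hs_eq, ← hs2]
    have hc' : c = s ^ 2 + x ^ 2 := by nlinarith
    rw [hc']
    have hxne : s ^ 2 + x ^ 2 ≠ 0 := by positivity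
    field_simp
    ring
  have hcont : ContinuousOn (fun x => (1 - x ^ 2 - y ^ 2) ^ (-(3:ℝ)/2)) (Set.uIcc (-a) a) := by
    apply ContinuousOn.rpow_const
    · fun_prop
    · intro x hx
      exact Or.inl (by have := hkey x hx; rw [hcy x]; exact this.ne')
  have heval := intervalIntegral.integral_eq_sub_of_hasDerivAt hderiv hcont.intervalIntegrable
  rw [heval]
  have hca : c - a ^ 2 = (1 - y) ^ 2 := by rw [ha2, hc_def]; ring
  rw [neg_sq, hca, Real.sqrt_sq (by linarith)]
  have h1y : (0:ℝ) < 1 - y := by linarith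
  field_simp
  ring


lemma outer_integral (η : ℝ) (hη0 : 0 ≤ η) (hη1 : η < 1) :
    (∫ y in (0:ℝ)..η, 2 * Real.sqrt (2 * y * (1 - y)) / ((1 - y ^ 2) * (1 - y))) =
      2 * Real.sqrt (2 * η) / Real.sqrt (1 - η) -
        2 * Real.arctan (Real.sqrt (2 * η) / Real.sqrt (1 - η)) := by
  set F : ℝ → ℝ := fun y =>
    2 * Real.sqrt (2 * y) / Real.sqrt (1 - y) -
      2 * Real.arctan (Real.sqrt (2 * y) / Real.sqrt (1 - y)) with hF_def
  have h1c : Continuous fun y : ℝ => Real.sqrt (2 * y) := by fun_prop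
  have h2c : Continuous fun y : ℝ => Real.sqrt (1 - y) := by fun_prop
  have hne : ∀ y ∈ Set.Icc (0:ℝ) η, Real.sqrt (1 - y) ≠ 0 := by
    intro y hy
    have : (0:ℝ) < 1 - y := by have := hy.2; linarith
    positivity
  have hcont : ContinuousOn F (Set.Icc 0 η) := by
    rw [hF_def]
    exact (((continuous_const.mul h1c).continuousOn.div h2c.continuousOn hne).sub
      (continuousOn_const.mul (Real.continuous_arctan.comp_continuousOn
        (h1c.continuousOn.div h2c.continuousOn hne))))
  have hderiv : ∀ y ∈ Set.Ioo (0:ℝ) η,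
      HasDerivAt F (2 * Real.sqrt (2 * y * (1 - y)) / ((1 - y ^ 2) * (1 - y))) y := by
    intro y hy
    obtain ⟨hy0, hyη⟩ := hy
    have hy1 : y < 1 := lt_of_lt_of_le hyη hη1.le
    have h2y : (0:ℝ) < 2 * y := by linarith
    have h1y : (0:ℝ) < 1 - y := by linarith
    have hs : HasDerivAt (fun y => Real.sqrt (2 * y)) (2 / (2 * Real.sqrt (2 * y))) y := by
      have := ((hasDerivAt_id y).const_mul 2).sqrt h2y.ne'
      simpa using this
    have ht : HasDerivAt (fun y => Real.sqrt (1 - y)) (-1 / (2 * Real.sqrt (1 - y))) y := by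
      have := ((hasDerivAt_id y).const_sub 1).sqrt h1y.ne'
      simpa using this
    have htne : Real.sqrt (1 - y) ≠ 0 := by positivity
    have hu := hs.div ht htne
    have h1 := (hs.const_mul 2).div ht htne
    have h2 := (hu.arctan).const_mul 2
    have H := h1.sub h2
    rw [hF_def]
    convert H using 1
    case e'_4 => rfl
    case e'_5 => rfl
    case e'_8 => rfl
    simp only [Pi.div_apply]
    obtain ⟨s, hs_eq, hspos, hs2⟩ : ∃ s, Real.sqrt (2 * y) = s ∧ 0 < s ∧ s ^ 2 = 2 * y :=
      ⟨_, rfl, Real.sqrt_pos.2 h2y, Real.sq_sqrt h2y.le⟩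
    obtain ⟨t, ht_eq, htpos, ht2⟩ : ∃ t, Real.sqrt (1 - y) = t ∧ 0 < t ∧ t ^ 2 = 1 - y :=
      ⟨_, rfl, Real.sqrt_pos.2 h1y, Real.sq_sqrt h1y.le⟩
    have hst : Real.sqrt (2 * y * (1 - y)) = s * t := by
      rw [Real.sqrt_mul h2y.le, hs_eq, ht_eq]
    have h1y2 : 1 - y ^ 2 = t ^ 2 * (2 - t ^ 2) := by rw [ht2]; ring
    have h1yt : 1 - y = t ^ 2 := ht2.symm
    have hs2' : s ^ 2 = 2 - 2 * t ^ 2 := by rw [hs2, ht2]; ring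
    rw [hst, hs_eq, ht_eq, h1y2, h1yt]
    have h2t : (0:ℝ) < 2 - t ^ 2 := by nlinarith
    have hden : 1 + (s / t) ^ 2 ≠ 0 := by positivity
    field_simp
    ring_nf
    linear_combination (s ^ 2 * t ^ 2) * hs2'
  have hint : IntervalIntegrable
      (fun y => 2 * Real.sqrt (2 * y * (1 - y)) / ((1 - y ^ 2) * (1 - y)))
      MeasureTheory.volume 0 η := by
    apply ContinuousOn.intervalIntegrable
    rw [Set.uIcc_of_le hη0]
    apply ContinuousOn.div
    · fun_prop
    · fun_prop
    · intro y hy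
      have hy1 : y < 1 := lt_of_le_of_lt hy.2 hη1
      have h1 : (0:ℝ) < 1 - y ^ 2 := by nlinarith [hy.1]
      have h2 : (0:ℝ) < 1 - y := by linarith
      positivity
  have hfin := intervalIntegral.integral_eq_sub_of_hasDerivAt_of_le hη0 hcont hderiv hint
  rw [hfin, hF_def]
  norm_num

theorem area_horodisk_segment (η : ℝ) (hη0 : 0 ≤ η) (hη1 : η < 1) :
    (∫ y in (0:ℝ)..η, ∫ x in (-(Real.sqrt (2 * y * (1 - y))))..(Real.sqrt (2 * y * (1 - y))),
        (1 - x ^ 2 - y ^ 2) ^ (-(3:ℝ)/2)) =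
      2 * Real.sqrt (2 * η) / Real.sqrt (1 - η) -
        2 * Real.arctan (Real.sqrt (2 * η) / Real.sqrt (1 - η)) := by
  rw [← outer_integral η hη0 hη1]
  apply intervalIntegral.integral_congr
  intro y hy
  rw [Set.uIcc_of_le hη0] at hy
  exact inner_integral y hy.1 (lt_of_le_of_lt hy.2 hη1)
end

section
/- Let 0 < C < 1 and 0 ≤ η < 1. Then ∫₀^η ∫_{−∞}^{−(1/C)√(1−y²)} (x² + y² − 1)^{−3/2} dx dy = ( (1 − √(1−C²)) / √(1−C²) ) · artanh η. (This is the Study–de Sitter area of the region W̃^C_η = {(x,y) : C²x² + y² ≥ 1, 0 ≤ y ≤ η, x ≤ 0}.) -/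
open MeasureTheory
open Set Filter Topology

lemma inner_int (C : ℝ) (hC0 : 0 < C) (hC1 : C < 1) (y : ℝ) (hy2 : y ^ 2 < 1) :
    (∫ x in Set.Iic (-(1 / C) * Real.sqrt (1 - y ^ 2)),
        (x ^ 2 + y ^ 2 - 1) ^ (-(3:ℝ)/2)) =
      (1 - Real.sqrt (1 - C ^ 2)) / Real.sqrt (1 - C ^ 2) * (1 - y ^ 2)⁻¹ := by
  set b := Real.sqrt (1 - y ^ 2) with hbdef
  set s := Real.sqrt (1 - C ^ 2) with hsdef
  have hb : 0 < b := Real.sqrt_pos.2 (by linarith)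
  have hb2 : b ^ 2 = 1 - y ^ 2 := Real.sq_sqrt (by linarith)
  have hs : 0 < s := Real.sqrt_pos.2 (by nlinarith)
  have hs2 : s ^ 2 = 1 - C ^ 2 := Real.sq_sqrt (by nlinarith)
  have hy1 : (0:ℝ) < 1 - y ^ 2 := by linarith
  have hLb : b < b / C := by
    rw [lt_div_iff₀ hC0]; nlinarith
  set g : ℝ → ℝ := fun x => -x / ((1 - y ^ 2) * Real.sqrt (x ^ 2 + y ^ 2 - 1)) with hgdef
  have hderiv : ∀ x ∈ Ici (b / C), HasDerivAt g ((x ^ 2 + y ^ 2 - 1) ^ (-(3:ℝ)/2)) x := by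
    intro x hx
    have hxb : b < x := lt_of_lt_of_le hLb hx
    have hu : 0 < x ^ 2 + y ^ 2 - 1 := by nlinarith
    set r := Real.sqrt (x ^ 2 + y ^ 2 - 1) with hrdef
    have hr : 0 < r := Real.sqrt_pos.2 hu
    have hr2 : r ^ 2 = x ^ 2 + y ^ 2 - 1 := Real.sq_sqrt hu.le
    have h1 : HasDerivAt (fun x : ℝ => x ^ 2 + y ^ 2 - 1) (2 * x) x := by
      have : (fun x : ℝ => x ^ 2 + y ^ 2 - 1) = fun x : ℝ => x ^ 2 + (y ^ 2 - 1) := by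
        ext t; ring
      rw [this]
      simpa using (hasDerivAt_pow 2 x).add_const (y ^ 2 - 1)
    have hsq : HasDerivAt (fun x : ℝ => Real.sqrt (x ^ 2 + y ^ 2 - 1)) (x / r) x := by
      have := (Real.hasDerivAt_sqrt (ne_of_gt hu)).comp x h1
      refine this.congr_deriv ?_
      rw [← hrdef]
      field_simp
    have hden : (1 - y ^ 2) * r ≠ 0 := by positivity
    have H := ((hasDerivAt_id x).neg.div (hsq.const_mul (1 - y ^ 2)) hden)
    have hrw : (x ^ 2 + y ^ 2 - 1) ^ (-(3:ℝ)/2) = (r ^ 3)⁻¹ := by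
      rw [show (-(3:ℝ)/2) = 1/2 * (-3) by norm_num, Real.rpow_mul hu.le,
        ← Real.sqrt_eq_rpow, ← hrdef, Real.rpow_neg hr.le,
        show (3:ℝ) = ((3:ℕ):ℝ) by norm_num, Real.rpow_natCast]
    refine H.congr_deriv ?_
    rw [hrw, ← hrdef]
    simp only [Pi.neg_apply, id]
    field_simp
    linear_combination (-1) * hr2
  have hpos : ∀ x ∈ Ioi (b / C), 0 ≤ (x ^ 2 + y ^ 2 - 1) ^ (-(3:ℝ)/2) := by
    intro x hx
    have hxb : b < x := lt_of_lt_of_le hLb hx.le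
    have hu : 0 < x ^ 2 + y ^ 2 - 1 := by nlinarith
    positivity
  have htend : Tendsto g atTop (𝓝 (-1 / (1 - y ^ 2))) := by
    have hc : ContinuousAt
        (fun t : ℝ => -1 / ((1 - y ^ 2) * Real.sqrt (1 - (1 - y ^ 2) * t ^ 2))) 0 := by
      apply ContinuousAt.div continuousAt_const
      · exact continuousAt_const.mul (Real.continuous_sqrt.continuousAt.comp (by fun_prop))
      · norm_num
        exact hy1.ne'
    have h0 := hc.tendsto.comp tendsto_inv_atTop_zero
    apply Tendsto.congr' _ (by simpa using h0)
    filter_upwards [eventually_gt_atTop b] with x hx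
    have hx0 : 0 < x := hb.trans hx
    have hxx : 1 - y ^ 2 < x ^ 2 := by nlinarith
    have hq : 0 < 1 - (1 - y ^ 2) * (x⁻¹) ^ 2 := by
      have : (1 - y ^ 2) * (x⁻¹) ^ 2 < 1 := by
        rw [inv_pow, ← div_eq_mul_inv, div_lt_one (by positivity)]
        exact hxx
      linarith
    have hsqrt : Real.sqrt (x ^ 2 + y ^ 2 - 1)
        = x * Real.sqrt (1 - (1 - y ^ 2) * (x⁻¹) ^ 2) := by
      have e : x ^ 2 + y ^ 2 - 1 = x ^ 2 * (1 - (1 - y ^ 2) * (x⁻¹) ^ 2) := by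
        field_simp
        ring
      rw [e, Real.sqrt_mul (sq_nonneg x), Real.sqrt_sq hx0.le]
    have hq' : Real.sqrt (1 - (1 - y ^ 2) * (x⁻¹) ^ 2) ≠ 0 := (Real.sqrt_pos.2 hq).ne'
    show -1 / ((1 - y ^ 2) * Real.sqrt (1 - (1 - y ^ 2) * (x⁻¹) ^ 2)) = g x
    simp only [hgdef]
    rw [hsqrt]
    field_simp
  have hL' : -(1/C) * b = -(b/C) := by ring
  rw [hL', ← integral_comp_neg_Ioi]
  simp only [neg_sq]
  rw [integral_Ioi_of_hasDerivAt_of_nonneg' hderiv hpos htend]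
  have hrad : (b/C) ^ 2 + y ^ 2 - 1 = (b * s / C) ^ 2 := by
    have e1 : (b * s / C) ^ 2 = b ^ 2 * s ^ 2 / C ^ 2 := by ring
    have e2 : (b/C) ^ 2 = b ^ 2 / C ^ 2 := by ring
    rw [e1, e2, hb2, hs2]
    field_simp
    ring
  simp only [hgdef]
  rw [hrad, Real.sqrt_sq (by positivity)]
  field_simp
  ring

noncomputable def artanh (x : ℝ) : ℝ := Real.log ((1 + x) / (1 - x)) / 2

theorem sds_area_W (C η : ℝ) (hC0 : 0 < C) (hC1 : C < 1) (hη0 : 0 ≤ η) (hη1 : η < 1) :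
    (∫ y in (0:ℝ)..η, ∫ x in Set.Iic (-(1 / C) * Real.sqrt (1 - y ^ 2)),
        (x ^ 2 + y ^ 2 - 1) ^ (-(3:ℝ)/2)) =
      (1 - Real.sqrt (1 - C ^ 2)) / Real.sqrt (1 - C ^ 2) * artanh η := by
  have key : Set.EqOn
      (fun y => ∫ x in Set.Iic (-(1 / C) * Real.sqrt (1 - y ^ 2)),
        (x ^ 2 + y ^ 2 - 1) ^ (-(3:ℝ)/2))
      (fun y => (1 - Real.sqrt (1 - C ^ 2)) / Real.sqrt (1 - C ^ 2) * (1 - y ^ 2)⁻¹)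
      (Set.uIcc 0 η) := by
    intro y hy
    rw [Set.uIcc_of_le hη0] at hy
    exact inner_int C hC0 hC1 y (by nlinarith [hy.1, hy.2])
  rw [intervalIntegral.integral_congr key, intervalIntegral.integral_const_mul]
  congr 1
  have hd : ∀ y ∈ Set.uIcc (0:ℝ) η,
      HasDerivAt (fun t => (Real.log (1 + t) - Real.log (1 - t)) / 2) ((1 - y ^ 2)⁻¹) y := by
    intro y hy
    rw [Set.uIcc_of_le hη0] at hy
    have h1 : (0:ℝ) < 1 + y := by linarith [hy.1]
    have h2 : (0:ℝ) < 1 - y := by linarith [hy.2]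
    have d1 : HasDerivAt (fun t : ℝ => Real.log (1 + t)) ((1 + y)⁻¹ * 1) y :=
      (Real.hasDerivAt_log h1.ne').comp y ((hasDerivAt_id y).const_add 1)
    have d2 : HasDerivAt (fun t : ℝ => Real.log (1 - t)) ((1 - y)⁻¹ * (-1)) y :=
      (Real.hasDerivAt_log h2.ne').comp y ((hasDerivAt_id y).const_sub 1)
    have := (d1.sub d2).div_const 2
    refine this.congr_deriv ?_
    have hy2 : (1:ℝ) - y ^ 2 ≠ 0 := by nlinarith [hy.1, hy.2]
    field_simp
    ring
  have hcont : IntervalIntegrable (fun y : ℝ => (1 - y ^ 2)⁻¹) volume 0 η := by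
    apply ContinuousOn.intervalIntegrable
    apply ContinuousOn.inv₀ (by fun_prop)
    intro y hy
    rw [Set.uIcc_of_le hη0] at hy
    have := hy.1; have := hy.2
    nlinarith
  rw [intervalIntegral.integral_eq_sub_of_hasDerivAt hd hcont]
  have h1 : (0:ℝ) < 1 + η := by linarith
  have h2 : (0:ℝ) < 1 - η := by linarith
  simp [artanh, Real.log_div h1.ne' h2.ne']
end
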